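/- Chain rule for a Boolean-to-integer function followed by a real-valued function of an integer variable: let f : B → ℤ and g : ℤ → ℝ, where g'(n) = g(n+1) - g(n) is the discrete derivative, and let x ∈ B. If |f'(x)| ≤ 1 and g'(f(x)) = g'(f(x) - 1), then (g ∘ f)'(x) = xnor(g'(f(x)), f'(x)), where xnor is the mixed-type XNOR of real numbers, i.e., multiplication. -/
import Mathlib


/-- The three-valued logic `M = {T, 0, F}`. -/
inductive Tri where
  | T : Tri
  | Z : Tri
  | F : Tri
deriving DecidableEq

/-- Mixed-type XNOR of `a ∈ M` with an integer `z`: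
`z` if `a = T`, `0` if `a = 0`, `-z` if `a = F`. -/
def mxnorZ : Tri → ℤ → ℤ
  | .T, z => z
  | .Z, _ => 0
  | .F, z => -z

/-- Mixed-type XNOR of `a ∈ M` with a real number `z`:
`z` if `a = T`, `0` if `a = 0`, `-z` if `a = F`. -/
def mxnorR : Tri → ℝ → ℝ
  | .T, z => z
  | .Z, _ => 0
  | .F, z => -z

/-- Variation `δ(x → y)` of a Boolean `x` to `y`, with order `F < T`
(`false < true`): `T` if `y > x`, `0` if `y = x`, `F` if `y < x`. -/
def bvar (x y : Bool) : Tri :=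
  if x = y then .Z else if y then .T else .F

/-- Variation of `f : B → ℤ`: `f'(x) = xnor(δ(x → ¬x), f(¬x) - f(x))`. -/
def varZ (f : Bool → ℤ) (x : Bool) : ℤ :=
  mxnorZ (bvar x (!x)) (f (!x) - f x)

/-- Variation of `f : B → ℝ`: `f'(x) = xnor(δ(x → ¬x), f(¬x) - f(x))`. -/
def varR (f : Bool → ℝ) (x : Bool) : ℝ :=
  mxnorR (bvar x (!x)) (f (!x) - f x)

/-- Discrete derivative of `g : ℤ → ℝ`: `g'(n) = g(n+1) - g(n)`. -/
def dderiv (g : ℤ → ℝ) (n : ℤ) : ℝ :=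
  g (n + 1) - g n

theorem varR_comp_discrete (f : Bool → ℤ) (g : ℤ → ℝ) (x : Bool)
    (h1 : |varZ f x| ≤ 1)
    (h2 : dderiv g (f x) = dderiv g (f x - 1)) :
    varR (fun t => g (f t)) x = dderiv g (f x) * (varZ f x : ℝ) := by
  cases x <;>
    simp only [varZ, varR, bvar, mxnorZ, mxnorR, dderiv, Bool.not_false, Bool.not_true,
      reduceIte, Bool.false_eq_true, Bool.true_eq_false] at * <;>
    ring_nf at h2 <;>
    rcases abs_le.mp h1 with ⟨hl, hr⟩
  · have e : f true = f false - 1 ∨ f true = f false ∨ f true = f false + 1 := by omega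
    rcases e with e|e|e <;> rw [e] <;> push_cast <;> ring_nf <;> linarith
  · have e : f false = f true - 1 ∨ f false = f true ∨ f false = f true + 1 := by omega
    rcases e with e|e|e <;> rw [e] <;> push_cast <;> ring_nf <;> linarith
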